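/- Let m₁ and n₂ be positive real numbers with n₂ ≥ 4m₁, and let θ ∈ (0, π/2). Then the equation 2m₁ + 4n₂ = m₁·((cot(θ/2))² + (tan(θ/2))²) + 4n₂·(tan θ)² holds if and only if (tan θ)² = (n₂ + √(n₂² − 4n₂m₁))/(2n₂) or (tan θ)² = (n₂ − √(n₂² − 4n₂m₁))/(2n₂). -/

import Mathlib

open Real

theorem stmt_7 (m₁ n₂ θ : ℝ) (hm₁ : 0 < m₁) (hn₂ : 0 < n₂) (h : n₂ ≥ 4 * m₁)
    (hθ : θ ∈ Set.Ioo 0 (π / 2)) :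
    2 * m₁ + 4 * n₂ =
        m₁ * ((Real.cot (θ / 2)) ^ 2 + (Real.tan (θ / 2)) ^ 2) +
          4 * n₂ * (Real.tan θ) ^ 2 ↔
      (Real.tan θ) ^ 2 = (n₂ + Real.sqrt (n₂ ^ 2 - 4 * n₂ * m₁)) / (2 * n₂) ∨
        (Real.tan θ) ^ 2 = (n₂ - Real.sqrt (n₂ ^ 2 - 4 * n₂ * m₁)) / (2 * n₂) := by
  obtain ⟨hθ0, hθ1⟩ := hθ
  have hπ := Real.pi_pos
  have ha : 0 < Real.sin (θ / 2) :=
    Real.sin_pos_of_pos_of_lt_pi (by linarith) (by linarith)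
  have hb : 0 < Real.cos (θ / 2) :=
    Real.cos_pos_of_mem_Ioo ⟨by linarith, by linarith⟩
  have hc : 0 < Real.cos θ := Real.cos_pos_of_mem_Ioo ⟨by linarith, by linarith⟩
  have hs : 0 < Real.sin θ := Real.sin_pos_of_pos_of_lt_pi hθ0 (by linarith)
  have hθeq : θ = 2 * (θ / 2) := by ring
  have hsin : Real.sin θ = 2 * Real.sin (θ / 2) * Real.cos (θ / 2) := by
    rw [hθeq, Real.sin_two_mul]; norm_num
  have hcos : Real.cos θ = Real.cos (θ / 2) ^ 2 - Real.sin (θ / 2) ^ 2 := by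
    rw [hθeq, Real.cos_two_mul']; norm_num
  set T := Real.tan θ ^ 2 with hTdef
  have hTpos : 0 < T := by
    rw [hTdef]
    have := Real.tan_pos_of_pos_of_lt_pi_div_two hθ0 hθ1
    positivity
  clear_value T
  have hba : Real.cos (θ / 2) ^ 2 - Real.sin (θ / 2) ^ 2 ≠ 0 := by
    rw [← hcos]; exact ne_of_gt hc
  have hcot : Real.cot (θ / 2) ^ 2 + Real.tan (θ / 2) ^ 2 = (4 + 2 * T) / T := by
    rw [hTdef, Real.cot_eq_cos_div_sin, Real.tan_eq_sin_div_cos,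
      Real.tan_eq_sin_div_cos θ, hsin, hcos]
    field_simp
    ring
  have hD : 0 ≤ n₂ ^ 2 - 4 * n₂ * m₁ := by nlinarith
  have hsq : Real.sqrt (n₂ ^ 2 - 4 * n₂ * m₁) ^ 2 = n₂ ^ 2 - 4 * n₂ * m₁ :=
    Real.sq_sqrt hD
  have hfactor : ∀ t : ℝ,
      n₂ * (t - (n₂ + Real.sqrt (n₂ ^ 2 - 4 * n₂ * m₁)) / (2 * n₂)) *
        (t - (n₂ - Real.sqrt (n₂ ^ 2 - 4 * n₂ * m₁)) / (2 * n₂)) =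
      n₂ * t ^ 2 - n₂ * t + m₁ := by
    intro t
    field_simp
    have hsq' : Real.sqrt (n₂ * (n₂ - 4 * m₁)) ^ 2 = n₂ * (n₂ - 4 * m₁) :=
      Real.sq_sqrt (by nlinarith)
    nlinarith [hsq, hsq']
  have hquad : (2 * m₁ + 4 * n₂ = m₁ * ((4 + 2 * T) / T) + 4 * n₂ * T) ↔
      n₂ * T ^ 2 - n₂ * T + m₁ = 0 := by
    have hT' := hTpos.ne'
    constructor
    · intro h'
      field_simp at h'
      linear_combination (-1/4 : ℝ) * h'
    · intro h'
      field_simp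
      linear_combination (-4 : ℝ) * h'
  rw [hcot, hquad, ← hfactor T]
  constructor
  · intro h'
    rcases mul_eq_zero.1 h' with h'' | h''
    · rcases mul_eq_zero.1 h'' with h''' | h'''
      · exact absurd h''' (ne_of_gt hn₂)
      · exact Or.inl (by linarith [sub_eq_zero.1 h'''])
    · exact Or.inr (by linarith [sub_eq_zero.1 h''])
  · rintro (h' | h')
    · rw [h']; ring
    · rw [h']; ring
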